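/- arXiv:2512.24875 — 2 statements merged into one kernel-verified Lean document; each statement's English description precedes it below -/
import Mathlib

section
/- Let γ̂ be C² and 2π-periodic with γ̂ > 0 and 3γ̂(θ) − γ̂(θ−π) ≥ c for all θ, where c > 0. Fix θ and α, and let A ≥ (π²/8)·(C_α·sup|γ̂''| + (3|α|+2)|γ̂'(θ)| + γ̂(θ) + (2/c)(α+1)²|γ̂'(θ)|²) with C_α = max{5, (4/π²)(2|α|+1)²}. Define P_A(φ) = γ̂(θ) + ((α−1)/2)γ̂'(θ)sin 2φ + A sin²φ and Q(φ) = γ̂(θ−φ) + γ̂(θ)cos φ + α γ̂'(θ)sin φ. Then the lower bound Q(φ) ≥ −P_A(φ) − γ̂(θ) holds for all φ. -/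
lemma taylor_upper (f : ℝ → ℝ) (hf : ContDiff ℝ 2 f) (M : ℝ)
    (hM : ∀ x, |deriv (deriv f) x| ≤ M) (x y : ℝ) :
    f (x + y) ≤ f x + deriv f x * y + M / 2 * y ^ 2 := by
  have hd1 : Differentiable ℝ f := hf.differentiable (by norm_num)
  have hf' : ContDiff ℝ 1 (deriv f) := by
    have h2 : ContDiff ℝ ((1 : ℕ∞) + 1) f := hf.of_le (by norm_num)
    exact (contDiff_succ_iff_deriv.mp h2).2.2
  have hd2 : Differentiable ℝ (deriv f) := hf'.differentiable (by norm_num)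
  -- h t = deriv f x + M*(t - x) - deriv f t  is monotone
  set h : ℝ → ℝ := fun t => deriv f x + M * (t - x) - deriv f t with hh
  have hmono : Monotone h := by
    have hdiff : Differentiable ℝ h := by
      apply Differentiable.sub _ hd2
      exact (differentiable_const _).add ((differentiable_const _).mul
        ((differentiable_id).sub (differentiable_const _)))
    apply monotone_of_deriv_nonneg hdiff
    intro t
    have hder : HasDerivAt h (M - deriv (deriv f) t) t := by
      have h1 : HasDerivAt (fun t : ℝ => deriv f x + M * (t - x)) M t := by
        have h0 := (((hasDerivAt_id t).sub_const x).const_mul M).const_add (deriv f x)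
        convert h0 using 1
        all_goals (try rfl)
        all_goals (try push_cast); (try simp only [id_eq]); ring
      exact h1.sub (hd2 t).hasDerivAt
    rw [hder.deriv]
    have := hM t
    have := abs_le.mp this
    linarith [this.2]
  have hhx : h x = 0 := by simp [hh]
  -- g t ≥ 0
  set g : ℝ → ℝ := fun t => f x + deriv f x * (t - x) + M / 2 * (t - x) ^ 2 - f t with hg
  have hgderiv : ∀ t, HasDerivAt g (h t) t := by
    intro t
    have h1 : HasDerivAt (fun t : ℝ => f x + deriv f x * (t - x) + M / 2 * (t - x) ^ 2)
        (deriv f x + M * (t - x)) t := by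
      have ha : HasDerivAt (fun t : ℝ => deriv f x * (t - x)) (deriv f x) t := by
        have h0 := ((hasDerivAt_id t).sub_const x).const_mul (deriv f x)
        convert h0 using 1
        all_goals (try rfl)
        all_goals (try push_cast); (try simp only [id_eq]); ring
      have hb : HasDerivAt (fun t : ℝ => M / 2 * (t - x) ^ 2) (M * (t - x)) t := by
        have h0 := (((hasDerivAt_id t).sub_const x).pow 2).const_mul (M / 2)
        convert h0 using 1
        all_goals (try rfl)
        all_goals (try push_cast); (try simp only [id_eq]); ring
      have := (ha.const_add (f x)).add hb
      convert this using 1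
      all_goals (try rfl)
      all_goals ring
    have := h1.sub (hd1 t).hasDerivAt
    exact this
  have hgx : g x = 0 := by simp [hg]
  have hgnonneg : ∀ t, 0 ≤ g t := by
    intro t
    rcases lt_trichotomy t x with ht | ht | ht
    · obtain ⟨k, hk, hk2⟩ := exists_hasDerivAt_eq_slope g h ht
        (fun s _ => (hgderiv s).continuousAt.continuousWithinAt) (fun s _ => hgderiv s)
      have hk0 : h k ≤ 0 := by
        have := hmono (le_of_lt hk.2)
        rw [hhx] at this; linarith
      rw [hgx] at hk2
      have hx : x - t > 0 := by linarith
      have : (0 - g t) / (x - t) ≤ 0 := hk2 ▸ hk0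
      have := div_nonpos_iff.mp this
      rcases this with ⟨h1, h2⟩ | ⟨h1, h2⟩
      · linarith
      · linarith
    · subst ht; rw [hgx]
    · obtain ⟨k, hk, hk2⟩ := exists_hasDerivAt_eq_slope g h ht
        (fun s _ => (hgderiv s).continuousAt.continuousWithinAt) (fun s _ => hgderiv s)
      have hk0 : 0 ≤ h k := by
        have := hmono (le_of_lt hk.1)
        rw [hhx] at this; linarith
      rw [hgx] at hk2
      have ht' : t - x > 0 := by linarith
      have : 0 ≤ (g t - 0) / (t - x) := hk2 ▸ hk0
      have := div_nonneg_iff.mp this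
      rcases this with ⟨h1, h2⟩ | ⟨h1, h2⟩
      · linarith
      · linarith
  have := hgnonneg (x + y)
  simp only [hg] at this
  have hxy : x + y - x = y := by ring
  rw [hxy] at this
  linarith

lemma sq_deriv_le (f : ℝ → ℝ) (hf : ContDiff ℝ 2 f) (hpos : ∀ x, 0 ≤ f x) (M : ℝ)
    (hM : ∀ x, |deriv (deriv f) x| ≤ M) (x : ℝ) :
    (deriv f x) ^ 2 ≤ 2 * M * f x := by
  have hq : ∀ y : ℝ, 0 ≤ M / 2 * y ^ 2 + deriv f x * y + f x := by
    intro y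
    have := taylor_upper f hf M hM x y
    have := hpos (x + y)
    linarith
  have hd : discrim (M / 2) (deriv f x) (f x) ≤ 0 := by
    apply discrim_le_zero
    intro y
    have := hq y
    nlinarith [this]
  rw [discrim] at hd
  nlinarith [hd]

set_option maxHeartbeats 1000000 in
theorem stmt_12 (γ : ℝ → ℝ) (hγ : ContDiff ℝ 2 γ)
    (hper : Function.Periodic γ (2 * Real.pi)) (hpos : ∀ x, 0 < γ x)
    (c : ℝ) (hc : 0 < c) (hlow : ∀ θ, 3 * γ θ - γ (θ - Real.pi) ≥ c)
    (θ α M A : ℝ) (hM : ∀ x, |deriv (deriv γ) x| ≤ M)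
    (hA : A ≥ Real.pi ^ 2 / 8 *
      (max 5 (4 / Real.pi ^ 2 * (2 * |α| + 1) ^ 2) * M
        + (3 * |α| + 2) * |deriv γ θ| + γ θ
        + 2 / c * (α + 1) ^ 2 * |deriv γ θ| ^ 2)) :
    ∀ φ : ℝ,
      γ (θ - φ) + γ θ * Real.cos φ + α * deriv γ θ * Real.sin φ
        ≥ -(γ θ + (α - 1) / 2 * deriv γ θ * Real.sin (2 * φ) + A * Real.sin φ ^ 2)
          - γ θ := by
  intro φ
  have hMpos : 0 ≤ M := le_trans (abs_nonneg _) (hM 0)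
  have hk0 : (deriv γ θ) ^ 2 ≤ 2 * M * γ θ := sq_deriv_le γ hγ (fun x => (hpos x).le) M hM θ
  have hpos2' : 0 < γ (θ - φ) := hpos _
  have hGpos0 : 0 < γ θ := hpos θ
  set g' := deriv γ θ with hg'
  set G := γ θ with hG
  set P := γ (θ - φ) with hP
  set K := 2 * |α| + 1 with hK
  clear_value g' G P K
  clear hγ hper hpos hlow hM
  have hGpos : 0 < G := hGpos0
  have hk : g' ^ 2 ≤ 2 * M * G := hk0
  -- A ≥ K^2 * M / 2
  have hπ : (0:ℝ) < Real.pi ^ 2 := by positivity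
  have hA' : K ^ 2 * M / 2 ≤ A := by
    have t1 : 4 / Real.pi ^ 2 * K ^ 2 ≤ max 5 (4 / Real.pi ^ 2 * K ^ 2) := le_max_right _ _
    have t2 : 4 / Real.pi ^ 2 * K ^ 2 * M ≤ max 5 (4 / Real.pi ^ 2 * K ^ 2) * M :=
      mul_le_mul_of_nonneg_right t1 hMpos
    have t3 : Real.pi ^ 2 / 8 * (4 / Real.pi ^ 2 * K ^ 2 * M) = K ^ 2 * M / 2 := by
      field_simp; ring
    have t4 : 0 ≤ (3 * |α| + 2) * |g'| := by positivity
    have t5 : 0 ≤ 2 / c * (α + 1) ^ 2 * |g'| ^ 2 :=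
      mul_nonneg (mul_nonneg (div_nonneg (by norm_num) hc.le) (sq_nonneg _)) (sq_nonneg _)
    nlinarith [hA, hπ, t2, t4, t5, hGpos]
  -- step : K * |g'| * |sin φ| ≤ G + A * sin φ ^ 2
  have hKpos : 0 < K := by rw [hK]; positivity
  have hKg : K ^ 2 * g' ^ 2 ≤ 4 * A * G := by
    have e1 : K ^ 2 * g' ^ 2 ≤ K ^ 2 * (2 * M * G) :=
      mul_le_mul_of_nonneg_left hk (sq_nonneg K)
    have e2 : K ^ 2 * M / 2 * G ≤ A * G :=
      mul_le_mul_of_nonneg_right hA' hGpos.le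
    have e3 : K ^ 2 * (2 * M * G) = 4 * (K ^ 2 * M / 2 * G) := by ring
    have e4 : 4 * A * G = 4 * (A * G) := by ring
    linarith
  have hstep : K * |g'| * |Real.sin φ| ≤ G + A * Real.sin φ ^ 2 := by
    have hApos : 0 ≤ A := by
      have : (0:ℝ) ≤ K ^ 2 * M / 2 := by positivity
      linarith
    have h1 : (K * |g'| * |Real.sin φ|) ^ 2 ≤ (G + A * Real.sin φ ^ 2) ^ 2 := by
      have e1 : (K * |g'| * |Real.sin φ|) ^ 2 = K ^ 2 * g' ^ 2 * Real.sin φ ^ 2 := by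
        rw [mul_pow, mul_pow, sq_abs, sq_abs]
      have e2 : K ^ 2 * g' ^ 2 * Real.sin φ ^ 2 ≤ 4 * A * G * Real.sin φ ^ 2 :=
        mul_le_mul_of_nonneg_right hKg (sq_nonneg _)
      have e3 : 4 * A * G * Real.sin φ ^ 2 ≤ (G + A * Real.sin φ ^ 2) ^ 2 := by
        nlinarith [sq_nonneg (G - A * Real.sin φ ^ 2)]
      linarith
    have hL : 0 ≤ K * |g'| * |Real.sin φ| :=
      mul_nonneg (mul_nonneg hKpos.le (abs_nonneg _)) (abs_nonneg _)
    have hR : 0 ≤ G + A * Real.sin φ ^ 2 := by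
      have := mul_nonneg hApos (sq_nonneg (Real.sin φ)); linarith
    nlinarith [h1, hL, hR]
  -- abs bound for the α terms
  have habs : -(K * |g'| * |Real.sin φ|) ≤
      α * g' * Real.sin φ + (α - 1) / 2 * g' * Real.sin (2 * φ) := by
    rw [Real.sin_two_mul]
    have hc1 : |Real.cos φ| ≤ 1 := Real.abs_cos_le_one φ
    have e : α * g' * Real.sin φ + (α - 1) / 2 * g' * (2 * Real.sin φ * Real.cos φ)
        = g' * Real.sin φ * (α + (α - 1) * Real.cos φ) := by ring
    rw [e]
    have h1 : |g' * Real.sin φ * (α + (α - 1) * Real.cos φ)| ≤ K * |g'| * |Real.sin φ| := by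
      rw [abs_mul, abs_mul]
      have h2 : |α + (α - 1) * Real.cos φ| ≤ K := by
        calc |α + (α - 1) * Real.cos φ| ≤ |α| + |α - 1| * |Real.cos φ| := by
              rw [← abs_mul]; exact abs_add_le _ _
          _ ≤ |α| + (|α| + 1) * 1 := by
              have : |α - 1| ≤ |α| + 1 := by
                calc |α - 1| ≤ |α| + |(1:ℝ)| := abs_sub _ _
                  _ = |α| + 1 := by norm_num
              have h3 : 0 ≤ |α - 1| := abs_nonneg _
              nlinarith [abs_nonneg (Real.cos φ)]
          _ = K := by rw [hK]; ring
      calc |g'| * |Real.sin φ| * |α + (α - 1) * Real.cos φ| ≤ |g'| * |Real.sin φ| * K := by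
            exact mul_le_mul_of_nonneg_left h2
              (mul_nonneg (abs_nonneg _) (abs_nonneg _))
        _ = K * |g'| * |Real.sin φ| := by ring
    have := neg_abs_le (g' * Real.sin φ * (α + (α - 1) * Real.cos φ))
    linarith
  have hcos : -G ≤ G * Real.cos φ := by
    nlinarith [Real.neg_one_le_cos φ, hGpos]
  have hpos2 : 0 < P := hpos2'
  linarith [hstep, habs, hcos, hpos2]
end

section
/- Let γ̂ be positive and define, for fixed θ and α, P_a(φ) = γ̂(θ) + ((α−1)/2)γ̂'(θ)sin 2φ + a sin²φ and Q(φ) = γ̂(θ−φ) + γ̂(θ)cos φ + α γ̂'(θ)sin φ. Suppose A ≥ 0 satisfies |Q(φ)| ≤ P_A(φ) + γ̂(θ) for all φ. Then for any a ≥ (1/(4γ̂(θ)))·(A² + 4γ̂(θ)A + (α−1)²γ̂'(θ)²), one has 4γ̂(θ)·P_a(φ) ≥ Q(φ)² for all φ. -/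
theorem stmt_14 (γ : ℝ → ℝ) (hdiff : Differentiable ℝ γ) (hpos : ∀ x, 0 < γ x)
    (θ α A a : ℝ) (hA : 0 ≤ A)
    (P : ℝ → ℝ → ℝ)
    (hP : P = fun b φ => γ θ + (α - 1) / 2 * deriv γ θ * Real.sin (2 * φ)
      + b * Real.sin φ ^ 2)
    (Q : ℝ → ℝ)
    (hQ : Q = fun φ => γ (θ - φ) + γ θ * Real.cos φ + α * deriv γ θ * Real.sin φ)
    (hbound : ∀ φ, |Q φ| ≤ P A φ + γ θ)
    (ha : a ≥ 1 / (4 * γ θ) * (A ^ 2 + 4 * γ θ * A + (α - 1) ^ 2 * deriv γ θ ^ 2)) :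
    ∀ φ, 4 * γ θ * P a φ ≥ Q φ ^ 2 := by
  intro φ
  have g0 : 0 < γ θ := hpos θ
  set g := γ θ with hg
  set w := (α - 1) * deriv γ θ with hw
  set s := Real.sin φ with hs
  set c := Real.cos φ with hc
  have hsc : s ^ 2 + c ^ 2 = 1 := Real.sin_sq_add_cos_sq φ
  have hQle : Q φ ^ 2 ≤ (P A φ + g) ^ 2 := by
    have h2 : |Q φ| ^ 2 ≤ (P A φ + g) ^ 2 :=
      pow_le_pow_left₀ (abs_nonneg _) (hbound φ) 2
    simpa [sq_abs] using h2
  have hPa : P a φ = P A φ + (a - A) * s ^ 2 := by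
    simp only [hP]; ring
  have hPA : P A φ - g = (w * c + A * s) * s := by
    simp only [hP, Real.sin_two_mul, hw, ← hs, ← hc, ← hg]; ring
  have h1 : (w * c + A * s) ^ 2 ≤ w ^ 2 + A ^ 2 := by
    nlinarith [sq_nonneg (w * s - A * c)]
  have h2 : w ^ 2 + A ^ 2 ≤ 4 * g * (a - A) := by
    rw [ge_iff_le, div_mul_eq_mul_div, div_le_iff₀ (by positivity)] at ha
    have hw2 : w ^ 2 = (α - 1) ^ 2 * deriv γ θ ^ 2 := by rw [hw]; ring
    linarith
  have h3 : (P A φ - g) ^ 2 ≤ 4 * g * (a - A) * s ^ 2 := by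
    rw [hPA]
    calc ((w * c + A * s) * s) ^ 2 = (w * c + A * s) ^ 2 * s ^ 2 := by ring
      _ ≤ (w ^ 2 + A ^ 2) * s ^ 2 := by
          exact mul_le_mul_of_nonneg_right h1 (sq_nonneg s)
      _ ≤ 4 * g * (a - A) * s ^ 2 := by
          exact mul_le_mul_of_nonneg_right h2 (sq_nonneg s)
  nlinarith [hQle, h3, hPa]
end
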